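/- Let M be a commutative idempotent monoid acting additively on an abelian group G, F : M → G a function satisfying the chain rule, and X_1, …, X_n ∈ M. Let K = (J, L_1, …, L_q) be a conditional partition of [n] with q ≥ 2 and set L = L_1 ∪ … ∪ L_q. Then the following are equivalent: (1) K induces an F-FCMI, i.e. X_{L_1}, …, X_{L_q} are mutually F-independent given X_J; (2) for all I ⊆ [q] with |I| ≥ 2: X_{J ∪ L ∖ L_I}.F(;_{i∈I} X_{L_i}) = 0, where L_I = ⋃_{i∈I} L_i; (3) for all I ⊆ [q] with |I| ≥ 2 and all families (W_i)_{i∈I} with ∅ ≠ W_i ⊆ L_i for each i ∈ I: X_{J ∪ L ∖ W_I}.F(;_{w∈W_I} X_w) = 0, where W_I = ⋃_{i∈I} W_i; (4) X_{[n]∖W}.F(;_{w∈W} X_w) = 0 for every atom p_W in the image IM(K). -/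

import Mathlib

namespace AMRF
/-- An additive monoid action of a commutative monoid `M` on an abelian group `G`. -/
structure MAction (M G : Type*) [CommMonoid M] [AddCommGroup G] where
  act : M → G → G
  act_one : ∀ g, act 1 g = g
  act_mul : ∀ X Y g, act X (act Y g) = act (X * Y) g
  act_add : ∀ X g h, act X (g + h) = act X g + act X h

variable {M G : Type*} [CommMonoid M] [AddCommGroup G]

/-- `F : M → G` satisfies the chain rule `F(XY) = F(X) + X.F(Y)`. -/
def ChainRule (A : MAction M G) (F : M → G) : Prop :=
  ∀ X Y : M, F (X * Y) = F X + A.act X (F Y)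

/-- Higher-order terms on a *reversed* argument list: the head of the list is the *last*
argument `Y_q` in `F_q(Y₁; …; Y_q)`. -/
def Fseq (A : MAction M G) (F : M → G) : List M → G
  | [] => 0
  | [Y] => F Y
  | Y :: Z :: l => Fseq A F (Z :: l) - A.act Y (Fseq A F (Z :: l))

/-- `Fof A F [Y₁, …, Y_q] = F_q(Y₁; …; Y_q)`, defined inductively by
`F_q(Y₁; …; Y_q) = F_{q−1}(Y₁; …; Y_{q−1}) − Y_q.F_{q−1}(Y₁; …; Y_{q−1})`. -/
def Fof (A : MAction M G) (F : M → G) (l : List M) : G :=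
  Fseq A F l.reverse

/-- The interaction term `F(;_{i∈I} X_i)`, with arguments in increasing index order. -/
def Fint (A : MAction M G) (F : M → G) {ι : Type*} [LinearOrder ι] (X : ι → M)
    (I : Finset ι) : G :=
  Fof A F ((I.sort (· ≤ ·)).map X)

/-- The `F`-independence relation: `X ⊥_F Y | Z` iff `Z.F(X; Y) = 0`, where
`F(X; Y) = F(X) − Y.F(X)` is the second-order term. -/
def Findep (A : MAction M G) (F : M → G) (X Y Z : M) : Prop :=
  A.act Z (F X - A.act Y (F X)) = 0

variable (A : MAction M G) (F : M → G)

lemma act_zero' (x : M) : A.act x 0 = 0 := by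
  have h := A.act_add x 0 0
  rw [add_zero] at h
  exact (left_eq_add.mp h)

lemma act_sub' (x : M) (g h : G) : A.act x (g - h) = A.act x g - A.act x h := by
  have h2 := A.act_add x (g - h) h
  rw [sub_add_cancel] at h2
  exact eq_sub_of_add_eq h2.symm

lemma act_comm' (x y : M) (g : G) : A.act x (A.act y g) = A.act y (A.act x g) := by
  rw [A.act_mul, A.act_mul, mul_comm]

lemma Fseq_cons (y : M) {l : List M} (hl : l ≠ []) :
    Fseq A F (y :: l) = Fseq A F l - A.act y (Fseq A F l) := by
  cases l with
  | nil => exact absurd rfl hl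
  | cons z l' => rfl

lemma chain_symm (hF : ChainRule A F) (x y : M) :
    F x - A.act y (F x) = F y - A.act x (F y) := by
  have h1 := hF x y
  have h2 := hF y x
  rw [mul_comm] at h2
  rw [h2] at h1
  rw [sub_eq_sub_iff_add_eq_add]
  exact h1.symm

lemma Fseq_perm (hF : ChainRule A F) {l₁ l₂ : List M} (h : l₁.Perm l₂) :
    Fseq A F l₁ = Fseq A F l₂ := by
  induction h with
  | nil => rfl
  | cons x h ih =>
      rename_i t₁ t₂
      cases t₁ with
      | nil => rw [h.nil_eq]  -- t₂ = [] ?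
      | cons a t =>
        have ht₂ : t₂ ≠ [] := by
          intro hh; rw [hh] at h; exact absurd h.symm.nil_eq (by simp)
        rw [Fseq_cons A F x (by simp), Fseq_cons A F x ht₂, ih]
  | swap x y l =>
      cases l with
      | nil =>
        show Fseq A F [y,x] = Fseq A F [x,y]
        show Fseq A F [x] - A.act y (Fseq A F [x]) = Fseq A F [y] - A.act x (Fseq A F [y])
        exact chain_symm A F hF x y
      | cons a t =>
        rw [Fseq_cons A F y (by simp), Fseq_cons A F x (l := a :: t) (by simp),
          Fseq_cons A F x (by simp), Fseq_cons A F y (l := a :: t) (by simp)]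
        set g := Fseq A F (a :: t)
        rw [act_sub', act_sub', act_comm']
        abel
  | trans h1 h2 ih1 ih2 => rw [ih1, ih2]

lemma Fof_perm (hF : ChainRule A F) {l₁ l₂ : List M} (h : l₁.Perm l₂) :
    Fof A F l₁ = Fof A F l₂ :=
  Fseq_perm A F hF (by exact (l₁.reverse_perm.trans h).trans l₂.reverse_perm.symm)

lemma Fof_append (y : M) {l : List M} (hl : l ≠ []) :
    Fof A F (l ++ [y]) = Fof A F l - A.act y (Fof A F l) := by
  unfold Fof
  rw [List.reverse_append]
  simp only [List.reverse_cons, List.reverse_nil, List.nil_append, List.singleton_append]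
  exact Fseq_cons A F y (by simpa using hl)

lemma Fof_pair (x y : M) : Fof A F [x, y] = F x - A.act y (F x) := rfl

lemma F_one (hF : ChainRule A F) : F 1 = 0 := by
  have h := hF 1 1
  rw [mul_one, A.act_one] at h
  exact (left_eq_add.mp h)

lemma Fof_one_mem (hF : ChainRule A F) {l : List M} (h : (1 : M) ∈ l) :
    Fof A F l = 0 := by
  obtain ⟨s, t, rfl⟩ := List.append_of_mem h
  have hp : (s ++ 1 :: t).Perm ((s ++ t) ++ [1]) :=
    List.perm_middle.trans (List.perm_append_singleton 1 (s ++ t)).symm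
  rw [Fof_perm A F hF hp]
  cases he : s ++ t with
  | nil => exact F_one A F hF
  | cons a u => rw [Fof_append A F 1 (by simp), A.act_one, sub_self]

lemma vanish_extend (z : M) {l : List M} (l₂ : List M) (hl : l ≠ [])
    (h : A.act z (Fof A F l) = 0) : A.act z (Fof A F (l ++ l₂)) = 0 := by
  induction l₂ using List.reverseRecOn with
  | nil => simpa using h
  | append_singleton r y ih =>
      rw [← List.append_assoc, Fof_append A F y (by simp [hl]), act_sub', ih,
        act_comm', ih, act_zero', sub_zero]

lemma Fof_mul_head (hF : ChainRule A F) (x y : M) (rest : List M) :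
    Fof A F ((x * y) :: rest) =
      Fof A F (x :: y :: rest) + A.act y (Fof A F (x :: rest))
        + A.act x (Fof A F (y :: rest)) := by
  induction rest using List.reverseRecOn with
  | nil =>
      rw [show Fof A F [x*y] = F (x*y) from rfl, hF x y, Fof_pair,
        show Fof A F [x] = F x from rfl, show Fof A F [y] = F y from rfl]
      show _ = F x - A.act y (F x) + A.act y (F x) + A.act x (F y)
      abel
  | append_singleton r z ih =>
      have h1 : (x*y) :: (r ++ [z]) = ((x*y) :: r) ++ [z] := by simp
      have h2 : x :: y :: (r ++ [z]) = (x :: y :: r) ++ [z] := by simp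
      have h3 : x :: (r ++ [z]) = (x :: r) ++ [z] := by simp
      have h4 : y :: (r ++ [z]) = (y :: r) ++ [z] := by simp
      rw [h1, h2, h3, h4, Fof_append A F z (by simp), Fof_append A F z (by simp),
        Fof_append A F z (by simp), Fof_append A F z (by simp), ih]
      rw [A.act_add, A.act_add, act_sub' A y, act_sub' A x, act_comm' A z y,
        act_comm' A z x]
      abel


def eE (A : MAction M G) (F : M → G) (x y : M) : G := F x - A.act y (F x)

lemma Fof_pair_e (x y : M) : Fof A F [x, y] = eE A F x y := rfl

lemma e_symm (hF : ChainRule A F) (x y : M) : eE A F x y = eE A F y x :=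
  chain_symm A F hF x y

lemma e_decomp (s t w : M) :
    eE A F s (t * w) = eE A F s t + A.act t (eE A F s w) := by
  unfold eE
  rw [act_sub', A.act_mul]
  abel

lemma e_absorb {t : M} (ht : t * t = t) (s : M) : A.act t (eE A F s t) = 0 := by
  unfold eE
  rw [act_sub', A.act_mul, ht, sub_self]

lemma e_one_right (s : M) : eE A F s 1 = 0 := by
  unfold eE; rw [A.act_one, sub_self]

lemma e_one_left (hF : ChainRule A F) (y : M) : eE A F 1 y = 0 := by
  unfold eE; rw [F_one A F hF, act_zero', sub_self]

/-- Weak union and decomposition for `F`-independence. -/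
lemma WD {c s t w : M} (ht : t * t = t) (hw : w * w = w)
    (h : A.act c (eE A F s (t * w)) = 0) :
    A.act c (eE A F s t) = 0 ∧ A.act c (eE A F s w) = 0 ∧
      A.act (c * t) (eE A F s w) = 0 ∧ A.act (c * w) (eE A F s t) = 0 := by
  have hI : A.act c (eE A F s t) + A.act (c * t) (eE A F s w) = 0 := by
    rw [← A.act_mul, ← A.act_add, ← e_decomp]; exact h
  have hII : A.act c (eE A F s w) + A.act (c * w) (eE A F s t) = 0 := by
    rw [← A.act_mul, ← A.act_add, ← e_decomp, mul_comm w t]; exact h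
  have hα : A.act (c * t) (eE A F s w) = 0 := by
    have h3 := congrArg (A.act t) hII
    rw [A.act_add, act_zero', act_comm' A t (c * w), e_absorb A F ht, act_zero',
      add_zero, A.act_mul, mul_comm t c] at h3
    exact h3
  have hβ : A.act c (eE A F s t) = 0 := by
    have := hI; rw [hα, add_zero] at this; exact this
  have hγ : A.act (c * w) (eE A F s t) = 0 := by
    have h3 := congrArg (A.act w) hβ
    rw [act_zero', A.act_mul, mul_comm w c] at h3
    exact h3
  have hδ : A.act c (eE A F s w) = 0 := by
    have := hII; rw [hγ, add_zero] at this; exact this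
  exact ⟨hβ, hδ, hα, hγ⟩


section Prod
variable {ι : Type*} [DecidableEq ι] (X : ι → M)

lemma prod_absorb (hidem : ∀ x : M, x * x = x) (S : Finset ι) : ∀ {T : Finset ι}, T ⊆ S →
    (∏ a ∈ S, X a) * (∏ a ∈ T, X a) = ∏ a ∈ S, X a := by
  intro T
  induction T using Finset.induction_on with
  | empty => intro _; rw [Finset.prod_empty, mul_one]
  | insert a T' ha ih =>
      intro hsub
      have haS : a ∈ S := hsub (Finset.mem_insert_self a T')
      have h1 : (∏ x ∈ S, X x) * X a = ∏ x ∈ S, X x := by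
        rw [← Finset.mul_prod_erase S X haS, mul_right_comm, hidem (X a)]
      rw [Finset.prod_insert ha, ← mul_assoc, h1,
        ih (fun x hx => hsub (Finset.mem_insert_of_mem hx))]

lemma prod_union' (hidem : ∀ x : M, x * x = x) (S T : Finset ι) :
    (∏ a ∈ S, X a) * (∏ a ∈ T, X a) = ∏ a ∈ S ∪ T, X a := by
  rw [← Finset.prod_union_inter]
  exact prod_absorb X hidem _ Finset.inter_subset_union

lemma prod_idem (hidem : ∀ x : M, x * x = x) (S : Finset ι) :
    (∏ a ∈ S, X a) * (∏ a ∈ S, X a) = ∏ a ∈ S, X a := by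
  rw [prod_union' X hidem, Finset.union_self]

lemma act_prod (hidem : ∀ x : M, x * x = x) (S T : Finset ι) (g : G) :
    A.act (∏ a ∈ S, X a) (A.act (∏ a ∈ T, X a) g) = A.act (∏ a ∈ S ∪ T, X a) g := by
  rw [A.act_mul, prod_union' X hidem]

end Prod

lemma permTwo {α : Type*} [DecidableEq α] {l : List α} {a b : α}
    (ha : a ∈ l) (hb : b ∈ l) (hab : a ≠ b) :
    l.Perm (a :: b :: (l.erase a).erase b) := by
  refine (List.perm_cons_erase ha).trans (List.Perm.cons a ?_)
  exact List.perm_cons_erase ((List.mem_erase_of_ne hab.symm).mpr hb)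

lemma mem_blU {ι : Type*} [DecidableEq ι] (bl : List (Finset ι)) (a : ι) :
    a ∈ bl.foldr (· ∪ ·) ∅ ↔ ∃ B ∈ bl, a ∈ B := by
  induction bl with
  | nil => simp
  | cons B bl ih => simp [ih]

lemma subset_blU {ι : Type*} [DecidableEq ι] {bl : List (Finset ι)} {B : Finset ι}
    (h : B ∈ bl) : B ⊆ bl.foldr (· ∪ ·) ∅ := by
  intro a ha; exact (mem_blU bl a).mpr ⟨B, h, ha⟩

lemma blU_perm {ι : Type*} [DecidableEq ι] {bl₁ bl₂ : List (Finset ι)}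
    (h : bl₁.Perm bl₂) : bl₁.foldr (· ∪ ·) ∅ = bl₂.foldr (· ∪ ·) ∅ := by
  ext a; simp only [mem_blU]
  constructor <;> rintro ⟨B, hB, haB⟩
  · exact ⟨B, h.mem_iff.mp hB, haB⟩
  · exact ⟨B, h.mem_iff.mpr hB, haB⟩


lemma Fint_def {ι : Type*} [LinearOrder ι] (X : ι → M) (I : Finset ι) :
    Fint A F X I = Fof A F ((I.sort (· ≤ ·)).map X) := rfl

section Main

variable {n q : ℕ}

/-- Statement (1): mutual `F`-independence of the classes given `J`. -/
def Stmt1 (A : MAction M G) (F : M → G) (X : Fin n → M) (J : Finset (Fin n))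
    (L : Fin q → Finset (Fin n)) : Prop :=
  ∀ i : Fin q,
    Findep A F (∏ a ∈ L i, X a) (∏ j ∈ Finset.univ.erase i, ∏ a ∈ L j, X a)
      (∏ a ∈ J, X a)

variable {A : MAction M G} {F : M → G} {X : Fin n → M}
  {J : Finset (Fin n)} {L : Fin q → Finset (Fin n)}

lemma step1 (hidem : ∀ x : M, x * x = x)
    (hLL : ∀ i j : Fin q, i ≠ j → Disjoint (L i) (L j))
    (h1 : Stmt1 A F X J L) (i : Fin q) (T : Finset (Fin q)) (hiT : i ∉ T) :
    A.act (∏ a ∈ J, X a)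
      (eE A F (∏ a ∈ L i, X a) (∏ a ∈ T.biUnion L, X a)) = 0 := by
  classical
  have h := h1 i
  unfold Findep at h
  have hdisj : (↑(Finset.univ.erase i) : Set (Fin q)).PairwiseDisjoint L := by
    intro a _ b _ hab; exact hLL a b hab
  rw [← Finset.prod_biUnion hdisj] at h
  have hTsub : T ⊆ Finset.univ.erase i := fun t ht =>
    Finset.mem_erase.mpr ⟨fun hti => hiT (hti ▸ ht), Finset.mem_univ t⟩
  have hsplit : (Finset.univ.erase i).biUnion L
      = T.biUnion L ∪ ((Finset.univ.erase i) \ T).biUnion L := by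
    ext a
    simp only [Finset.mem_biUnion, Finset.mem_union, Finset.mem_sdiff]
    constructor
    · rintro ⟨j, hj, haj⟩
      by_cases hjT : j ∈ T
      · exact Or.inl ⟨j, hjT, haj⟩
      · exact Or.inr ⟨j, ⟨hj, hjT⟩, haj⟩
    · rintro (⟨j, hj, haj⟩ | ⟨j, hj, haj⟩)
      · exact ⟨j, hTsub hj, haj⟩
      · exact ⟨j, hj.1, haj⟩
  rw [hsplit, ← prod_union' X hidem] at h
  exact (WD A F (prod_idem X hidem _) (prod_idem X hidem _) h).1

lemma step2 (hidem : ∀ x : M, x * x = x) (hF : ChainRule A F)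
    (hLL : ∀ i j : Fin q, i ≠ j → Disjoint (L i) (L j))
    (h1 : Stmt1 A F X J L) :
    ∀ S T : Finset (Fin q), Disjoint S T →
      A.act (∏ a ∈ J, X a)
        (eE A F (∏ a ∈ S.biUnion L, X a) (∏ a ∈ T.biUnion L, X a)) = 0 := by
  classical
  intro S
  induction S using Finset.induction_on with
  | empty =>
      intro T _
      rw [Finset.biUnion_empty, Finset.prod_empty, e_one_left A F hF, act_zero']
  | insert i S' ha ih =>
      intro T hST
      have hiT : i ∉ T := fun hiT =>
        (Finset.disjoint_left.mp hST (Finset.mem_insert_self i S')) hiT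
      have hS'T : Disjoint S' T :=
        Finset.disjoint_of_subset_left (Finset.subset_insert i S') hST
      rw [Finset.biUnion_insert]
      have : (∏ a ∈ L i ∪ S'.biUnion L, X a)
          = (∏ a ∈ S'.biUnion L, X a) * ∏ a ∈ L i, X a := by
        rw [prod_union' X hidem, Finset.union_comm]
      rw [this, e_symm A F hF, e_decomp, A.act_add, e_symm A F hF, ih T hS'T,
        act_comm', e_symm A F hF (∏ a ∈ T.biUnion L, X a), step1 hidem hLL h1 i T hiT,
        act_zero', add_zero]

lemma reduce_right (hidem : ∀ x : M, x * x = x) (C T : Finset (Fin n)) (s : M) :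
    A.act (∏ a ∈ C, X a) (eE A F s (∏ a ∈ T, X a))
      = A.act (∏ a ∈ C, X a) (eE A F s (∏ a ∈ T \ C, X a)) := by
  classical
  have hT : (∏ a ∈ T, X a) = (∏ a ∈ T \ C, X a) * ∏ a ∈ T ∩ C, X a := by
    rw [prod_union' X hidem, Finset.sdiff_union_inter]
  rw [hT, e_decomp, A.act_add, act_prod A X hidem]
  have habs : (∏ a ∈ C ∪ T \ C, X a) * (∏ a ∈ T ∩ C, X a)
      = ∏ a ∈ C ∪ T \ C, X a :=
    prod_absorb X hidem _ (Finset.inter_subset_right.trans Finset.subset_union_left)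
  have : A.act (∏ a ∈ C ∪ T \ C, X a) (eE A F s (∏ a ∈ T ∩ C, X a)) = 0 := by
    rw [← habs, ← A.act_mul, e_absorb A F (prod_idem X hidem _), act_zero']
  rw [this, add_zero]

lemma step3 (hidem : ∀ x : M, x * x = x) (hF : ChainRule A F)
    (hLL : ∀ i j : Fin q, i ≠ j → Disjoint (L i) (L j))
    (hcover : J ∪ Finset.univ.biUnion L = Finset.univ)
    (h1 : Stmt1 A F X J L) (Iq : Finset (Fin q)) (S T C : Finset (Fin n))
    (hS : S ⊆ Iq.biUnion L) (hT : T ⊆ Iqᶜ.biUnion L) (hC : J ⊆ C) :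
    A.act (∏ a ∈ C, X a) (eE A F (∏ a ∈ S, X a) (∏ a ∈ T, X a)) = 0 := by
  classical
  rw [reduce_right hidem, e_symm A F hF, reduce_right hidem, e_symm A F hF]
  set U := Iq.biUnion L with hU
  set V := Iqᶜ.biUnion L with hV
  set S' := S \ C with hS'
  set T' := T \ C with hT'
  have hS'U : S' ⊆ U := (Finset.sdiff_subset).trans hS
  have hT'V : T' ⊆ V := (Finset.sdiff_subset).trans hT
  set A₁ := U ∩ C with hA₁
  set A₂ := (U \ C) \ S' with hA₂
  set B₁ := V ∩ C with hB₁
  set B₂ := (V \ C) \ T' with hB₂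
  have hUsplit : U = A₁ ∪ (S' ∪ A₂) := by
    ext a
    have := @hS'U a
    simp only [hA₁, hA₂, hS', Finset.mem_union, Finset.mem_inter, Finset.mem_sdiff] at *
    tauto
  have hVsplit : V = B₁ ∪ (T' ∪ B₂) := by
    ext a
    have := @hT'V a
    simp only [hB₁, hB₂, hT', Finset.mem_union, Finset.mem_inter, Finset.mem_sdiff] at *
    tauto
  have h0 : A.act (∏ a ∈ J, X a) (eE A F (∏ a ∈ V, X a) (∏ a ∈ U, X a)) = 0 := by
    rw [e_symm A F hF]
    exact step2 hidem hF hLL h1 Iq Iqᶜ disjoint_compl_right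
  -- move A₁ into the conditioning
  rw [hUsplit, ← prod_union' X hidem] at h0
  have h0a := (WD A F (prod_idem X hidem A₁) (prod_idem X hidem (S' ∪ A₂)) h0).2.2.1
  rw [prod_union' X hidem, e_symm A F hF] at h0a
  -- h0a : act (∏ J∪A₁) (eE (∏ S'∪A₂) (∏ V)) = 0
  rw [hVsplit, show (∏ a ∈ B₁ ∪ (T' ∪ B₂), X a)
      = (∏ a ∈ B₁, X a) * ∏ a ∈ T' ∪ B₂, X a from (prod_union' X hidem _ _).symm] at h0a
  have h0b := (WD A F (prod_idem X hidem B₁) (prod_idem X hidem (T' ∪ B₂)) h0a).2.2.1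
  rw [prod_union' X hidem] at h0b
  -- h0b : act (∏ (J∪A₁)∪B₁) (eE (∏ S'∪A₂) (∏ T'∪B₂)) = 0
  have hCeq : J ∪ A₁ ∪ B₁ = C := by
    apply Finset.Subset.antisymm
    · intro a ha
      rcases Finset.mem_union.mp ha with h | h
      · rcases Finset.mem_union.mp h with h | h
        · exact hC h
        · exact (Finset.mem_inter.mp h).2
      · exact (Finset.mem_inter.mp h).2
    · intro a ha
      have hau : a ∈ J ∪ Finset.univ.biUnion L := by
        rw [hcover]; exact Finset.mem_univ a
      rcases Finset.mem_union.mp hau with h | h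
      · exact Finset.mem_union_left _ (Finset.mem_union_left _ h)
      · obtain ⟨i, _, hai⟩ := Finset.mem_biUnion.mp h
        by_cases hiI : i ∈ Iq
        · refine Finset.mem_union_left _ (Finset.mem_union_right _ ?_)
          exact Finset.mem_inter.mpr ⟨Finset.mem_biUnion.mpr ⟨i, hiI, hai⟩, ha⟩
        · refine Finset.mem_union_right _ ?_
          exact Finset.mem_inter.mpr
            ⟨Finset.mem_biUnion.mpr ⟨i, Finset.mem_compl.mpr hiI, hai⟩, ha⟩
  rw [hCeq] at h0b
  -- now drop A₂ and B₂
  rw [show (∏ a ∈ T' ∪ B₂, X a) = (∏ a ∈ B₂, X a) * ∏ a ∈ T', X a by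
    rw [prod_union' X hidem, Finset.union_comm]] at h0b
  have h0c := (WD A F (prod_idem X hidem B₂) (prod_idem X hidem T') h0b).2.1
  rw [e_symm A F hF, show (∏ a ∈ S' ∪ A₂, X a) = (∏ a ∈ A₂, X a) * ∏ a ∈ S', X a by
    rw [prod_union' X hidem, Finset.union_comm]] at h0c
  have h0d := (WD A F (prod_idem X hidem A₂) (prod_idem X hidem S') h0c).2.1
  rw [e_symm A F hF] at h0d
  exact h0d

lemma step4 (hidem : ∀ x : M, x * x = x) (hF : ChainRule A F)
    (hLL : ∀ i j : Fin q, i ≠ j → Disjoint (L i) (L j))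
    (hcover : J ∪ Finset.univ.biUnion L = Finset.univ)
    (h1 : Stmt1 A F X J L) (Iq : Finset (Fin q)) (B₁ B₂ C : Finset (Fin n))
    (ws : List M) (h₁ : B₁ ⊆ Iq.biUnion L) (h₂ : B₂ ⊆ Iqᶜ.biUnion L) (hC : J ⊆ C) :
    A.act (∏ a ∈ C, X a)
      (Fof A F ((∏ a ∈ B₁, X a) :: (∏ a ∈ B₂, X a) :: ws)) = 0 := by
  have base : A.act (∏ a ∈ C, X a)
      (Fof A F [∏ a ∈ B₁, X a, ∏ a ∈ B₂, X a]) = 0 := by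
    rw [Fof_pair_e]
    exact step3 hidem hF hLL hcover h1 Iq B₁ B₂ C h₁ h₂ hC
  simpa using vanish_extend A F (∏ a ∈ C, X a) ws (by simp) base

def Stmt2 (A : MAction M G) (F : M → G) (X : Fin n → M) (J : Finset (Fin n))
    (L : Fin q → Finset (Fin n)) : Prop :=
  ∀ I : Finset (Fin q), 2 ≤ I.card →
    A.act (∏ a ∈ (J ∪ Finset.univ.biUnion L) \ I.biUnion L, X a)
      (Fint A F (fun i => ∏ a ∈ L i, X a) I) = 0

def Stmt3 (A : MAction M G) (F : M → G) (X : Fin n → M) (J : Finset (Fin n))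
    (L : Fin q → Finset (Fin n)) : Prop :=
  ∀ I : Finset (Fin q), 2 ≤ I.card → ∀ W : Fin q → Finset (Fin n),
    (∀ i ∈ I, W i ⊆ L i ∧ (W i).Nonempty) →
    A.act (∏ a ∈ (J ∪ Finset.univ.biUnion L) \ I.biUnion W, X a)
      (Fint A F X (I.biUnion W)) = 0

def Stmt4 (A : MAction M G) (F : M → G) (X : Fin n → M) (J : Finset (Fin n))
    (L : Fin q → Finset (Fin n)) : Prop :=
  ∀ Wset : Finset (Fin n),
    (∃ I : Finset (Fin q), 2 ≤ I.card ∧ ∃ W : Fin q → Finset (Fin n),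
      (∀ i ∈ I, W i ⊆ L i ∧ (W i).Nonempty) ∧ Wset = I.biUnion W) →
    A.act (∏ a ∈ Finset.univ \ Wset, X a) (Fint A F X Wset) = 0

lemma h13 (hidem : ∀ x : M, x * x = x) (hF : ChainRule A F)
    (hLL : ∀ i j : Fin q, i ≠ j → Disjoint (L i) (L j))
    (hJL : ∀ i : Fin q, Disjoint J (L i))
    (hcover : J ∪ Finset.univ.biUnion L = Finset.univ)
    (h1 : Stmt1 A F X J L) : Stmt3 A F X J L := by
  classical
  intro I hI W hW
  obtain ⟨i, hiI, j, hjI, hij⟩ := Finset.one_lt_card.mp hI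
  obtain ⟨wi, hwi⟩ := (hW i hiI).2
  obtain ⟨wj, hwj⟩ := (hW j hjI).2
  have hwiL : wi ∈ L i := (hW i hiI).1 hwi
  have hwjL : wj ∈ L j := (hW j hjI).1 hwj
  have hne : wi ≠ wj := by
    intro h
    exact Finset.disjoint_left.mp (hLL i j hij) hwiL (h ▸ hwjL)
  set Wset := I.biUnion W with hWset
  have hwiW : wi ∈ Wset := Finset.mem_biUnion.mpr ⟨i, hiI, hwi⟩
  have hwjW : wj ∈ Wset := Finset.mem_biUnion.mpr ⟨j, hjI, hwj⟩
  set sortl := Wset.sort (· ≤ ·) with hsortl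
  have hperm : sortl.Perm (wi :: wj :: ((sortl.erase wi).erase wj)) :=
    permTwo ((Finset.mem_sort _).mpr hwiW) ((Finset.mem_sort _).mpr hwjW) hne
  rw [Fint_def A F]
  rw [Fof_perm A F hF (hperm.map X)]
  simp only [List.map_cons]
  rw [show X wi = ∏ a ∈ ({wi} : Finset (Fin n)), X a from (Finset.prod_singleton _ _).symm,
    show X wj = ∏ a ∈ ({wj} : Finset (Fin n)), X a from (Finset.prod_singleton _ _).symm]
  apply step4 hidem hF hLL hcover h1 {i}
  · intro a ha
    rw [Finset.mem_singleton] at ha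
    subst ha
    exact Finset.mem_biUnion.mpr ⟨i, Finset.mem_singleton_self i, hwiL⟩
  · intro a ha
    rw [Finset.mem_singleton] at ha
    subst ha
    refine Finset.mem_biUnion.mpr ⟨j, ?_, hwjL⟩
    exact Finset.mem_compl.mpr (by simpa using hij.symm)
  · intro a ha
    rw [Finset.mem_sdiff]
    refine ⟨Finset.mem_union_left _ ha, fun hmem => ?_⟩
    obtain ⟨i', hi', hai'⟩ := Finset.mem_biUnion.mp hmem
    exact Finset.disjoint_left.mp (hJL i') ha ((hW i' hi').1 hai')

lemma h34 (hcover : J ∪ Finset.univ.biUnion L = Finset.univ)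
    (h3 : Stmt3 A F X J L) : Stmt4 A F X J L := by
  rintro Wset ⟨I, hI, W, hW, rfl⟩
  have hset : Finset.univ \ I.biUnion W
      = (J ∪ Finset.univ.biUnion L) \ I.biUnion W := by rw [hcover]
  rw [hset]
  exact h3 I hI W hW

lemma h43 (hcover : J ∪ Finset.univ.biUnion L = Finset.univ)
    (h4 : Stmt4 A F X J L) : Stmt3 A F X J L := by
  intro I hI W hW
  have hset : Finset.univ \ I.biUnion W
      = (J ∪ Finset.univ.biUnion L) \ I.biUnion W := by rw [hcover]
  rw [← hset]
  exact h4 (I.biUnion W) ⟨I, hI, W, hW, rfl⟩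

lemma Qall (hidem : ∀ x : M, x * x = x) (hF : ChainRule A F)
    (h2 : Stmt2 A F X J L) :
    ∀ (d : ℕ) (Iq : Finset (Fin q)) (C : Finset (Fin n)),
      ((Iqᶜ).filter (fun m => ¬ L m ⊆ C)).card ≤ d → 2 ≤ Iq.card → J ⊆ C →
      A.act (∏ a ∈ C, X a)
        (Fof A F ((Iq.sort (· ≤ ·)).map (fun i => ∏ a ∈ L i, X a))) = 0 := by
  classical
  have base : ∀ (Iq : Finset (Fin q)) (C : Finset (Fin n)),
      ((Iqᶜ).filter (fun m => ¬ L m ⊆ C)) = ∅ → 2 ≤ Iq.card → J ⊆ C →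
      A.act (∏ a ∈ C, X a)
        (Fof A F ((Iq.sort (· ≤ ·)).map (fun i => ∏ a ∈ L i, X a))) = 0 := by
    intro Iq C hflt hcard hJC
    have hsub : (J ∪ Finset.univ.biUnion L) \ Iq.biUnion L ⊆ C := by
      intro a ha
      obtain ⟨hain, hanot⟩ := Finset.mem_sdiff.mp ha
      rcases Finset.mem_union.mp hain with h | h
      · exact hJC h
      · obtain ⟨i, _, hai⟩ := Finset.mem_biUnion.mp h
        have hiIq : i ∉ Iq := fun hiIq => hanot (Finset.mem_biUnion.mpr ⟨i, hiIq, hai⟩)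
        have : L i ⊆ C := by
          by_contra hLC
          have : i ∈ (Iqᶜ).filter (fun m => ¬ L m ⊆ C) :=
            Finset.mem_filter.mpr ⟨Finset.mem_compl.mpr hiIq, hLC⟩
          rw [hflt] at this
          exact absurd this (Finset.notMem_empty i)
        exact this hai
    set b := (J ∪ Finset.univ.biUnion L) \ Iq.biUnion L with hb
    have hCsplit : C = (C \ b) ∪ b := by
      rw [Finset.sdiff_union_of_subset hsub]
    rw [hCsplit, ← act_prod A X hidem]
    have := h2 Iq hcard
    rw [Fint_def A F] at this
    rw [← hb] at this
    rw [this, act_zero']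
  intro d
  induction d with
  | zero =>
      intro Iq C hd hcard hJC
      exact base Iq C (Finset.card_eq_zero.mp (Nat.le_zero.mp hd)) hcard hJC
  | succ d ih =>
      intro Iq C hd hcard hJC
      by_cases hflt : ((Iqᶜ).filter (fun m => ¬ L m ⊆ C)) = ∅
      · exact base Iq C hflt hcard hJC
      · obtain ⟨m, hm⟩ := Finset.nonempty_of_ne_empty hflt
        obtain ⟨hmIq, hLmC⟩ := Finset.mem_filter.mp hm
        have hmnot : m ∉ Iq := Finset.mem_compl.mp hmIq
        set f : Fin q → M := fun i => ∏ a ∈ L i, X a with hf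
        have hperm : ((insert m Iq).sort (· ≤ ·)).Perm (m :: Iq.sort (· ≤ ·)) := by
          refine (Finset.sort_perm_toList _ _).trans ?_
          refine (Finset.toList_insert hmnot).trans ?_
          exact (Finset.sort_perm_toList _ _).symm.cons m
        have hperm2 : (((insert m Iq).sort (· ≤ ·)).map f).Perm
            (((Iq.sort (· ≤ ·)).map f) ++ [f m]) := by
          refine (hperm.map f).trans ?_
          exact (List.perm_append_singleton _ _).symm
        have hnonnil : (Iq.sort (· ≤ ·)).map f ≠ [] := by
          intro h
          have h0 : (Iq.sort (· ≤ ·)).length = 0 := by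
            rw [List.map_eq_nil_iff.mp h]; rfl
          rw [Finset.length_sort] at h0
          omega
        have hkey : Fof A F (((insert m Iq).sort (· ≤ ·)).map f)
            = Fof A F ((Iq.sort (· ≤ ·)).map f)
              - A.act (f m) (Fof A F ((Iq.sort (· ≤ ·)).map f)) := by
          rw [Fof_perm A F hF hperm2, Fof_append A F _ hnonnil]
        -- the two decreasing quantities
        have hmem : m ∈ (Iqᶜ).filter (fun m => ¬ L m ⊆ C) := hm
        have hcard1 : (((insert m Iq)ᶜ).filter (fun m' => ¬ L m' ⊆ C)).card ≤ d := by
          have hsub1 : ((insert m Iq)ᶜ).filter (fun m' => ¬ L m' ⊆ C)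
              ⊆ ((Iqᶜ).filter (fun m' => ¬ L m' ⊆ C)).erase m := by
            intro x hx
            obtain ⟨hx1, hx2⟩ := Finset.mem_filter.mp hx
            rw [Finset.compl_insert] at hx1
            refine Finset.mem_erase.mpr ⟨(Finset.mem_erase.mp hx1).1, ?_⟩
            exact Finset.mem_filter.mpr ⟨(Finset.mem_erase.mp hx1).2, hx2⟩
          calc (((insert m Iq)ᶜ).filter (fun m' => ¬ L m' ⊆ C)).card
              ≤ (((Iqᶜ).filter (fun m' => ¬ L m' ⊆ C)).erase m).card :=
                Finset.card_le_card hsub1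
            _ = ((Iqᶜ).filter (fun m' => ¬ L m' ⊆ C)).card - 1 :=
                Finset.card_erase_of_mem hmem
            _ ≤ d := by omega
        have hcard2 : ((Iqᶜ).filter (fun m' => ¬ L m' ⊆ C ∪ L m)).card ≤ d := by
          have hsub2 : (Iqᶜ).filter (fun m' => ¬ L m' ⊆ C ∪ L m)
              ⊆ ((Iqᶜ).filter (fun m' => ¬ L m' ⊆ C)).erase m := by
            intro x hx
            obtain ⟨hx1, hx2⟩ := Finset.mem_filter.mp hx
            refine Finset.mem_erase.mpr ⟨?_, Finset.mem_filter.mpr ⟨hx1, ?_⟩⟩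
            · intro hxm
              subst hxm
              exact hx2 Finset.subset_union_right
            · intro hsubC
              exact hx2 (hsubC.trans Finset.subset_union_left)
          calc ((Iqᶜ).filter (fun m' => ¬ L m' ⊆ C ∪ L m)).card
              ≤ (((Iqᶜ).filter (fun m' => ¬ L m' ⊆ C)).erase m).card :=
                Finset.card_le_card hsub2
            _ = ((Iqᶜ).filter (fun m' => ¬ L m' ⊆ C)).card - 1 :=
                Finset.card_erase_of_mem hmem
            _ ≤ d := by omega
        have ih1 := ih (insert m Iq) C hcard1
          (hcard.trans (Finset.card_le_card (Finset.subset_insert m Iq))) hJC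
        have ih2 := ih Iq (C ∪ L m) hcard2 hcard (hJC.trans Finset.subset_union_left)
        have : A.act (∏ a ∈ C, X a) (Fof A F ((Iq.sort (· ≤ ·)).map f))
            = A.act (∏ a ∈ C, X a) (Fof A F (((insert m Iq).sort (· ≤ ·)).map f))
              + A.act (∏ a ∈ C ∪ L m, X a) (Fof A F ((Iq.sort (· ≤ ·)).map f)) := by
          rw [hkey, act_sub']
          rw [show A.act (∏ a ∈ C, X a) (A.act (f m) (Fof A F ((Iq.sort (· ≤ ·)).map f)))
              = A.act (∏ a ∈ C ∪ L m, X a) (Fof A F ((Iq.sort (· ≤ ·)).map f)) from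
            act_prod A X hidem C (L m) _]
          abel
        rw [this, ih1, ih2, add_zero]

lemma h21 (hidem : ∀ x : M, x * x = x) (hF : ChainRule A F)
    (hLL : ∀ i j : Fin q, i ≠ j → Disjoint (L i) (L j))
    (h2 : Stmt2 A F X J L) : Stmt1 A F X J L := by
  classical
  intro i
  unfold Findep
  have hdisj : (↑(Finset.univ.erase i) : Set (Fin q)).PairwiseDisjoint L := by
    intro a _ b _ hab; exact hLL a b hab
  rw [← Finset.prod_biUnion hdisj]
  have gen : ∀ T : Finset (Fin q), i ∉ T →
      A.act (∏ a ∈ J, X a)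
        (eE A F (∏ a ∈ L i, X a) (∏ a ∈ T.biUnion L, X a)) = 0 := by
    intro T
    induction T using Finset.induction_on with
    | empty =>
        intro _
        rw [Finset.biUnion_empty, Finset.prod_empty, e_one_right, act_zero']
    | insert t T' ha ih =>
        intro hins
        have hit : i ≠ t := fun h => hins (h ▸ Finset.mem_insert_self t T')
        have hiT' : i ∉ T' := fun h => hins (Finset.mem_insert_of_mem h)
        rw [Finset.biUnion_insert]
        rw [show (∏ a ∈ L t ∪ T'.biUnion L, X a)
            = (∏ a ∈ T'.biUnion L, X a) * ∏ a ∈ L t, X a by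
          rw [prod_union' X hidem, Finset.union_comm]]
        rw [e_decomp, A.act_add, ih hiT', act_prod A X hidem, zero_add]
        -- now apply Qall with Iq = {i, t}
        have hitcard : 2 ≤ ({i, t} : Finset (Fin q)).card := by
          rw [Finset.card_insert_of_notMem (by simpa using hit), Finset.card_singleton]
        have hq := Qall hidem hF h2
          ((({i, t} : Finset (Fin q))ᶜ).filter
            (fun m => ¬ L m ⊆ J ∪ T'.biUnion L)).card
          {i, t} (J ∪ T'.biUnion L) le_rfl hitcard Finset.subset_union_left
        have hpermit : (({i, t} : Finset (Fin q)).sort (· ≤ ·)).Perm [i, t] := by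
          refine (Finset.sort_perm_toList _ _).trans ?_
          refine (Finset.toList_insert (by simpa using hit)).trans ?_
          rw [Finset.toList_singleton]
        rw [Fof_perm A F hF (hpermit.map (fun i => ∏ a ∈ L i, X a))] at hq
        simp only [List.map_cons, List.map_nil] at hq
        rw [Fof_pair_e] at hq
        exact hq
  have := gen (Finset.univ.erase i) (Finset.notMem_erase i _)
  exact this

lemma permSing (bl : List (Finset (Fin n))) (hsing : ∀ B ∈ bl, ∃ b, B = {b})
    (hdisj : bl.Pairwise Disjoint) :
    (bl.map (fun B => ∏ a ∈ B, X a)).Perm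
      (((bl.foldr (· ∪ ·) ∅).sort (· ≤ ·)).map X) := by
  classical
  induction bl with
  | nil => simp
  | cons B bl ih =>
      obtain ⟨b, rfl⟩ := hsing B (List.mem_cons_self)
      have hd := List.pairwise_cons.mp hdisj
      have hbU : b ∉ bl.foldr (· ∪ ·) ∅ := by
        intro hb
        obtain ⟨B', hB', hbB'⟩ := (mem_blU bl b).mp hb
        exact Finset.disjoint_left.mp (hd.1 B' hB') (Finset.mem_singleton_self b) hbB'
      have hperm : ((({b} : Finset (Fin n)) ∪ bl.foldr (· ∪ ·) ∅).sort (· ≤ ·)).Perm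
          (b :: (bl.foldr (· ∪ ·) ∅).sort (· ≤ ·)) := by
        rw [← Finset.insert_eq]
        refine (Finset.sort_perm_toList _ _).trans ?_
        refine (Finset.toList_insert hbU).trans ?_
        exact ((Finset.sort_perm_toList _ _).symm.cons b)
      simp only [List.map_cons, List.foldr_cons]
      rw [Finset.prod_singleton]
      refine List.Perm.trans
        ((ih (fun B hB => hsing B (List.mem_cons_of_mem _ hB)) hd.2).cons (X b)) ?_
      have h2 := hperm.map X
      simp only [List.map_cons] at h2
      exact h2.symm

lemma ZZbase (hF : ChainRule A F) (h3 : Stmt3 A F X J L)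
    (bl : List (Finset (Fin n))) (hsing : ∀ B ∈ bl, ∃ b, B = {b})
    (hdisj : bl.Pairwise Disjoint) (hcl : ∀ B ∈ bl, ∃ i, B ⊆ L i)
    (hcross : ∃ i j B₁ B₂, i ≠ j ∧ B₁ ∈ bl ∧ B₂ ∈ bl ∧ B₁ ⊆ L i ∧ B₂ ⊆ L j ∧
      B₁.Nonempty ∧ B₂.Nonempty) :
    A.act (∏ a ∈ (J ∪ Finset.univ.biUnion L) \ bl.foldr (· ∪ ·) ∅, X a)
      (Fof A F (bl.map (fun B => ∏ a ∈ B, X a))) = 0 := by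
  classical
  set Wset := bl.foldr (· ∪ ·) ∅ with hWset
  set W : Fin q → Finset (Fin n) := fun i => Wset ∩ L i with hW
  set I : Finset (Fin q) := Finset.univ.filter (fun i => (W i).Nonempty) with hI
  obtain ⟨i, j, B₁, B₂, hij, hB₁, hB₂, hB₁L, hB₂L, hB₁n, hB₂n⟩ := hcross
  have hiI : i ∈ I := by
    obtain ⟨b, hb⟩ := hB₁n
    exact Finset.mem_filter.mpr ⟨Finset.mem_univ i,
      ⟨b, Finset.mem_inter.mpr ⟨subset_blU hB₁ hb, hB₁L hb⟩⟩⟩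
  have hjI : j ∈ I := by
    obtain ⟨b, hb⟩ := hB₂n
    exact Finset.mem_filter.mpr ⟨Finset.mem_univ j,
      ⟨b, Finset.mem_inter.mpr ⟨subset_blU hB₂ hb, hB₂L hb⟩⟩⟩
  have hIcard : 2 ≤ I.card := Finset.one_lt_card.mpr ⟨i, hiI, j, hjI, hij⟩
  have hWsub : ∀ i ∈ I, W i ⊆ L i ∧ (W i).Nonempty := fun i hi =>
    ⟨Finset.inter_subset_right, (Finset.mem_filter.mp hi).2⟩
  have hbiU : I.biUnion W = Wset := by
    ext a
    rw [Finset.mem_biUnion]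
    constructor
    · rintro ⟨i0, _, ha⟩
      exact Finset.inter_subset_left ha
    · intro ha
      obtain ⟨B0, hB0, haB0⟩ := (mem_blU bl a).mp ha
      obtain ⟨i0, hi0⟩ := hcl B0 hB0
      have haW : a ∈ W i0 := Finset.mem_inter.mpr ⟨ha, hi0 haB0⟩
      exact ⟨i0, Finset.mem_filter.mpr ⟨Finset.mem_univ i0, ⟨a, haW⟩⟩, haW⟩
  have h := h3 I hIcard W hWsub
  rw [hbiU, Fint_def A F] at h
  rw [Fof_perm A F hF (permSing bl hsing hdisj)]
  exact h

lemma ZZrec (hidem : ∀ x : M, x * x = x) (hF : ChainRule A F)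
    (h3 : Stmt3 A F X J L) :
    ∀ (k : ℕ) (bl : List (Finset (Fin n))),
      ((bl.map (fun B => B.card - 1)).sum ≤ k) →
      (∀ B ∈ bl, B.Nonempty) → (∀ B ∈ bl, ∃ i, B ⊆ L i) → bl.Pairwise Disjoint →
      (∃ i j B₁ B₂, i ≠ j ∧ B₁ ∈ bl ∧ B₂ ∈ bl ∧ B₁ ⊆ L i ∧ B₂ ⊆ L j) →
      A.act (∏ a ∈ (J ∪ Finset.univ.biUnion L) \ bl.foldr (· ∪ ·) ∅, X a)
        (Fof A F (bl.map (fun B => ∏ a ∈ B, X a))) = 0 := by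
  classical
  have hbase : ∀ (bl : List (Finset (Fin n))),
      (∀ B ∈ bl, ∃ b, B = {b}) → (∀ B ∈ bl, ∃ i, B ⊆ L i) → bl.Pairwise Disjoint →
      (∀ B ∈ bl, B.Nonempty) →
      (∃ i j B₁ B₂, i ≠ j ∧ B₁ ∈ bl ∧ B₂ ∈ bl ∧ B₁ ⊆ L i ∧ B₂ ⊆ L j) →
      A.act (∏ a ∈ (J ∪ Finset.univ.biUnion L) \ bl.foldr (· ∪ ·) ∅, X a)
        (Fof A F (bl.map (fun B => ∏ a ∈ B, X a))) = 0 := by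
    intro bl hsing hcl hdisj hne hcross
    obtain ⟨i, j, B₁, B₂, hij, hB₁, hB₂, hB₁L, hB₂L⟩ := hcross
    exact ZZbase hF h3 bl hsing hdisj hcl
      ⟨i, j, B₁, B₂, hij, hB₁, hB₂, hB₁L, hB₂L, hne B₁ hB₁, hne B₂ hB₂⟩
  intro k
  induction k with
  | zero =>
      intro bl hm hne hcl hdisj hcross
      have hsing : ∀ B ∈ bl, ∃ b, B = {b} := by
        intro B hB
        have h0 : B.card - 1 = 0 := by
          have := List.sum_eq_zero_iff.mp (Nat.le_zero.mp hm) (B.card - 1)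
            (List.mem_map.mpr ⟨B, hB, rfl⟩)
          exact this
        have h1 : 0 < B.card := Finset.card_pos.mpr (hne B hB)
        exact Finset.card_eq_one.mp (by omega)
      exact hbase bl hsing hcl hdisj hne hcross
  | succ k ih =>
      intro bl hm hne hcl hdisj hcross
      by_cases hsing : ∀ B ∈ bl, ∃ b, B = {b}
      · exact hbase bl hsing hcl hdisj hne hcross
      · push_neg at hsing
        obtain ⟨B, hB, hBn⟩ := hsing
        have hBc : 2 ≤ B.card := by
          have h1 : 0 < B.card := Finset.card_pos.mpr (hne B hB)
          have h2 : B.card ≠ 1 := by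
            intro h
            obtain ⟨b, hb⟩ := Finset.card_eq_one.mp h
            exact hBn b hb
          omega
        set rest := bl.erase B with hrest
        have hpb : bl.Perm (B :: rest) := List.perm_cons_erase hB
        rw [blU_perm hpb, Fof_perm A F hF (hpb.map _)]
        have hrsub : ∀ B' ∈ rest, B' ∈ bl := fun B' h => List.mem_of_mem_erase h
        have hdisj2 : (B :: rest).Pairwise Disjoint :=
          (hpb.pairwise_iff (fun h => h.symm)).mp hdisj
        have hBdisj : ∀ B' ∈ rest, Disjoint B B' := (List.pairwise_cons.mp hdisj2).1
        have hrestdisj : rest.Pairwise Disjoint := (List.pairwise_cons.mp hdisj2).2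
        obtain ⟨iB, hiB⟩ := hcl B hB
        obtain ⟨b, hb⟩ := hne B hB
        set B' := B.erase b with hB'def
        have hbB' : b ∉ B' := Finset.notMem_erase b B
        have hB'card : B'.card = B.card - 1 := Finset.card_erase_of_mem hb
        have hB'ne : B'.Nonempty := Finset.card_pos.mp (by omega)
        have hB'sub : B' ⊆ B := Finset.erase_subset b B
        have hbriefly : ({b} : Finset (Fin n)) ⊆ B := Finset.singleton_subset_iff.mpr hb
        have hsplitB : (∏ a ∈ B, X a)
            = (∏ a ∈ ({b} : Finset (Fin n)), X a) * ∏ a ∈ B', X a := by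
          rw [prod_union' X hidem, ← Finset.insert_eq, Finset.insert_erase hb]
        set R := rest.foldr (· ∪ ·) ∅ with hR
        have hRsub : ∀ B'' ∈ rest, B'' ⊆ R := fun B'' h => subset_blU h
        have hBR : Disjoint B R := by
          rw [Finset.disjoint_right]
          intro a haR haB
          obtain ⟨B'', hB'', haB''⟩ := (mem_blU rest a).mp haR
          exact Finset.disjoint_left.mp (hBdisj B'' hB'') haB haB''
        have hmsum : ((B :: rest).map (fun B => B.card - 1)).sum ≤ k + 1 := by
          rw [← (hpb.map (fun B => B.card - 1)).sum_eq]
          exact hm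
        have hSr : (B.card - 1) + (rest.map (fun B => B.card - 1)).sum ≤ k + 1 := by
          simpa using hmsum
        -- the three sublists
        have hclB' : B' ⊆ L iB := hB'sub.trans hiB
        have hclb : ({b} : Finset (Fin n)) ⊆ L iB := hbriefly.trans hiB
        -- membership transfer helper
        have hget : ∀ {B₀ : Finset (Fin n)} {i0 : Fin q} {Bb : Finset (Fin n)},
            Bb ⊆ B → B₀ ∈ bl → B₀ ⊆ L i0 →
            ∃ Bx, (Bx = Bb ∨ Bx ∈ rest) ∧ Bx ⊆ L i0 := by
          intro B₀ i0 Bb hBbB h0 hsub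
          by_cases hEq : B₀ = B
          · exact ⟨Bb, Or.inl rfl, hBbB.trans (hEq ▸ hsub)⟩
          · exact ⟨B₀, Or.inr ((List.mem_erase_of_ne hEq).mpr h0), hsub⟩
        obtain ⟨ci, cj, CB₁, CB₂, hcij, hCB₁, hCB₂, hCL₁, hCL₂⟩ := hcross
        have hBu : B ⊆ Finset.univ.biUnion L :=
          hiB.trans (Finset.subset_biUnion_of_mem L (Finset.mem_univ iB))
        -- the conditioning set identity used for the two side terms
        have hsplit2 : ∀ (P Q : Finset (Fin n)), P ∪ Q = B → Disjoint P Q →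
            (J ∪ Finset.univ.biUnion L) \ (B ∪ R) ∪ Q
              = (J ∪ Finset.univ.biUnion L) \ (P ∪ R) := by
          intro P Q hPQ hPQd
          ext a
          simp only [Finset.mem_union, Finset.mem_sdiff]
          constructor
          · rintro (⟨h1, h2⟩ | hQ)
            · refine ⟨h1, fun hPR => h2 ?_⟩
              rcases hPR with hP | hR'
              · exact Or.inl (by rw [← hPQ]; exact Finset.mem_union_left _ hP)
              · exact Or.inr hR'
            · have haB : a ∈ B := by
                rw [← hPQ]; exact Finset.mem_union_right _ hQ
              refine ⟨Or.inr (hBu haB), fun hPR => ?_⟩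
              rcases hPR with hP | hR'
              · exact Finset.disjoint_right.mp hPQd hQ hP
              · exact Finset.disjoint_left.mp hBR haB hR'
          · rintro ⟨h1, h2⟩
            by_cases haB : a ∈ B
            · refine Or.inr ?_
              have hPQ' : a ∈ P ∪ Q := by rw [hPQ]; exact haB
              rcases Finset.mem_union.mp hPQ' with hP | hQ
              · exact absurd (Or.inl hP) h2
              · exact hQ
            · refine Or.inl ⟨h1, fun hBR' => ?_⟩
              rcases hBR' with hB0 | hR'
              · exact haB hB0
              · exact h2 (Or.inr hR')
        have hbB'union : ({b} : Finset (Fin n)) ∪ B' = B := by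
          rw [← Finset.insert_eq, Finset.insert_erase hb]
        have hdisjbB' : Disjoint ({b} : Finset (Fin n)) B' :=
          Finset.disjoint_singleton_left.mpr hbB'
        have eq2 := hsplit2 {b} B' hbB'union hdisjbB'
        have eq3 := hsplit2 B' {b} (by rw [Finset.union_comm]; exact hbB'union)
          hdisjbB'.symm
        -- goal rewriting
        simp only [List.map_cons, List.foldr_cons]
        rw [← hR, hsplitB, Fof_mul_head A F hF, A.act_add, A.act_add,
          act_prod A X hidem _ B', act_prod A X hidem _ ({b} : Finset (Fin n)),
          eq2, eq3]
        -- term 1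
        have m1 : ((({b} : Finset (Fin n)) :: B' :: rest).map
            (fun B => B.card - 1)).sum ≤ k := by
          simp only [List.map_cons, List.sum_cons, Finset.card_singleton]
          omega
        have ne1 : ∀ B0 ∈ (({b} : Finset (Fin n)) :: B' :: rest), B0.Nonempty := by
          intro B0 h0
          rcases h0 with _ | ⟨_, h0⟩
          · exact Finset.singleton_nonempty b
          · rcases h0 with _ | ⟨_, h0⟩
            · exact hB'ne
            · exact hne B0 (hrsub B0 h0)
        have cl1 : ∀ B0 ∈ (({b} : Finset (Fin n)) :: B' :: rest), ∃ i, B0 ⊆ L i := by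
          intro B0 h0
          rcases h0 with _ | ⟨_, h0⟩
          · exact ⟨iB, hclb⟩
          · rcases h0 with _ | ⟨_, h0⟩
            · exact ⟨iB, hclB'⟩
            · exact hcl B0 (hrsub B0 h0)
        have d1 : (({b} : Finset (Fin n)) :: B' :: rest).Pairwise Disjoint := by
          refine List.pairwise_cons.mpr ⟨?_, List.pairwise_cons.mpr ⟨?_, hrestdisj⟩⟩
          · intro B0 h0
            rcases h0 with _ | ⟨_, h0⟩
            · exact hdisjbB'
            · exact (hBdisj B0 h0).mono_left hbriefly
          · intro B0 h0
            exact (hBdisj B0 h0).mono_left hB'sub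
        have memtrans1 : ∀ {Bx : Finset (Fin n)}, (Bx = ({b} : Finset (Fin n)) ∨ Bx ∈ rest) →
            Bx ∈ (({b} : Finset (Fin n)) :: B' :: rest) := by
          rintro Bx (rfl | h)
          · exact List.mem_cons_self
          · exact List.mem_cons_of_mem _ (List.mem_cons_of_mem _ h)
        have cr1 : ∃ i j B₁ B₂, i ≠ j ∧ B₁ ∈ (({b} : Finset (Fin n)) :: B' :: rest) ∧
            B₂ ∈ (({b} : Finset (Fin n)) :: B' :: rest) ∧ B₁ ⊆ L i ∧ B₂ ⊆ L j := by
          obtain ⟨Bx₁, hx₁, hxL₁⟩ := hget (Bb := ({b} : Finset (Fin n))) hbriefly hCB₁ hCL₁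
          obtain ⟨Bx₂, hx₂, hxL₂⟩ := hget (Bb := ({b} : Finset (Fin n))) hbriefly hCB₂ hCL₂
          exact ⟨ci, cj, Bx₁, Bx₂, hcij, memtrans1 hx₁, memtrans1 hx₂, hxL₁, hxL₂⟩
        have t1 := ih (({b} : Finset (Fin n)) :: B' :: rest) m1 ne1 cl1 d1 cr1
        have e1 : ((({b} : Finset (Fin n)) :: B' :: rest).foldr (· ∪ ·) ∅)
            = B ∪ R := by
          simp only [List.foldr_cons]
          rw [← Finset.union_assoc, hbB'union]
        rw [e1] at t1
        simp only [List.map_cons] at t1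
        -- term 2
        have m2 : ((({b} : Finset (Fin n)) :: rest).map (fun B => B.card - 1)).sum ≤ k := by
          simp only [List.map_cons, List.sum_cons, Finset.card_singleton]
          omega
        have ne2 : ∀ B0 ∈ (({b} : Finset (Fin n)) :: rest), B0.Nonempty := by
          intro B0 h0
          rcases h0 with _ | ⟨_, h0⟩
          · exact Finset.singleton_nonempty b
          · exact hne B0 (hrsub B0 h0)
        have cl2 : ∀ B0 ∈ (({b} : Finset (Fin n)) :: rest), ∃ i, B0 ⊆ L i := by
          intro B0 h0
          rcases h0 with _ | ⟨_, h0⟩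
          · exact ⟨iB, hclb⟩
          · exact hcl B0 (hrsub B0 h0)
        have d2 : (({b} : Finset (Fin n)) :: rest).Pairwise Disjoint :=
          List.pairwise_cons.mpr
            ⟨fun B0 h0 => (hBdisj B0 h0).mono_left hbriefly, hrestdisj⟩
        have memtrans2 : ∀ {Bx : Finset (Fin n)}, (Bx = ({b} : Finset (Fin n)) ∨ Bx ∈ rest) →
            Bx ∈ (({b} : Finset (Fin n)) :: rest) := by
          rintro Bx (rfl | h)
          · exact List.mem_cons_self
          · exact List.mem_cons_of_mem _ h
        have cr2 : ∃ i j B₁ B₂, i ≠ j ∧ B₁ ∈ (({b} : Finset (Fin n)) :: rest) ∧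
            B₂ ∈ (({b} : Finset (Fin n)) :: rest) ∧ B₁ ⊆ L i ∧ B₂ ⊆ L j := by
          obtain ⟨Bx₁, hx₁, hxL₁⟩ := hget (Bb := ({b} : Finset (Fin n))) hbriefly hCB₁ hCL₁
          obtain ⟨Bx₂, hx₂, hxL₂⟩ := hget (Bb := ({b} : Finset (Fin n))) hbriefly hCB₂ hCL₂
          exact ⟨ci, cj, Bx₁, Bx₂, hcij, memtrans2 hx₁, memtrans2 hx₂, hxL₁, hxL₂⟩
        have t2 := ih (({b} : Finset (Fin n)) :: rest) m2 ne2 cl2 d2 cr2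
        have e2' : ((({b} : Finset (Fin n)) :: rest).foldr (· ∪ ·) ∅)
            = ({b} : Finset (Fin n)) ∪ R := by
          simp only [List.foldr_cons]
          rfl
        rw [e2'] at t2
        simp only [List.map_cons] at t2
        -- term 3
        have m3 : ((B' :: rest).map (fun B => B.card - 1)).sum ≤ k := by
          simp only [List.map_cons, List.sum_cons]
          omega
        have ne3 : ∀ B0 ∈ (B' :: rest), B0.Nonempty := by
          intro B0 h0
          rcases h0 with _ | ⟨_, h0⟩
          · exact hB'ne
          · exact hne B0 (hrsub B0 h0)
        have cl3 : ∀ B0 ∈ (B' :: rest), ∃ i, B0 ⊆ L i := by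
          intro B0 h0
          rcases h0 with _ | ⟨_, h0⟩
          · exact ⟨iB, hclB'⟩
          · exact hcl B0 (hrsub B0 h0)
        have d3 : (B' :: rest).Pairwise Disjoint :=
          List.pairwise_cons.mpr
            ⟨fun B0 h0 => (hBdisj B0 h0).mono_left hB'sub, hrestdisj⟩
        have memtrans3 : ∀ {Bx : Finset (Fin n)}, (Bx = B' ∨ Bx ∈ rest) →
            Bx ∈ (B' :: rest) := by
          rintro Bx (rfl | h)
          · exact List.mem_cons_self
          · exact List.mem_cons_of_mem _ h
        have cr3 : ∃ i j B₁ B₂, i ≠ j ∧ B₁ ∈ (B' :: rest) ∧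
            B₂ ∈ (B' :: rest) ∧ B₁ ⊆ L i ∧ B₂ ⊆ L j := by
          obtain ⟨Bx₁, hx₁, hxL₁⟩ := hget (Bb := B') hB'sub hCB₁ hCL₁
          obtain ⟨Bx₂, hx₂, hxL₂⟩ := hget (Bb := B') hB'sub hCB₂ hCL₂
          exact ⟨ci, cj, Bx₁, Bx₂, hcij, memtrans3 hx₁, memtrans3 hx₂, hxL₁, hxL₂⟩
        have t3 := ih (B' :: rest) m3 ne3 cl3 d3 cr3
        have e3' : ((B' :: rest).foldr (· ∪ ·) ∅) = B' ∪ R := by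
          simp only [List.foldr_cons]
          rfl
        rw [e3'] at t3
        simp only [List.map_cons] at t3
        rw [t1, t2, t3]
        simp

lemma h32 (hidem : ∀ x : M, x * x = x) (hF : ChainRule A F)
    (hLL : ∀ i j : Fin q, i ≠ j → Disjoint (L i) (L j))
    (h3 : Stmt3 A F X J L) : Stmt2 A F X J L := by
  classical
  intro I hI
  rw [Fint_def A F]
  by_cases hemp : ∃ i ∈ I, L i = ∅
  · obtain ⟨i, hiI, hLi⟩ := hemp
    have h1mem : (1 : M) ∈ (I.sort (· ≤ ·)).map (fun i => ∏ a ∈ L i, X a) :=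
      List.mem_map.mpr ⟨i, (Finset.mem_sort _).mpr hiI, by rw [hLi, Finset.prod_empty]⟩
    rw [Fof_one_mem A F hF h1mem, act_zero']
  · push_neg at hemp
    set bl := (I.sort (· ≤ ·)).map L with hbl
    have hfold : bl.foldr (· ∪ ·) ∅ = I.biUnion L := by
      ext a
      rw [mem_blU, Finset.mem_biUnion]
      constructor
      · rintro ⟨B, hB, haB⟩
        obtain ⟨i, hi, rfl⟩ := List.mem_map.mp hB
        exact ⟨i, (Finset.mem_sort _).mp hi, haB⟩
      · rintro ⟨i, hi, ha⟩
        exact ⟨L i, List.mem_map.mpr ⟨i, (Finset.mem_sort _).mpr hi, rfl⟩, ha⟩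
    have hmap : bl.map (fun B => ∏ a ∈ B, X a)
        = (I.sort (· ≤ ·)).map (fun i => ∏ a ∈ L i, X a) := by
      rw [hbl, List.map_map]
      rfl
    have hne : ∀ B ∈ bl, B.Nonempty := by
      intro B hB
      obtain ⟨i, hi, rfl⟩ := List.mem_map.mp hB
      exact hemp i ((Finset.mem_sort _).mp hi)
    have hcl : ∀ B ∈ bl, ∃ i, B ⊆ L i := by
      intro B hB
      obtain ⟨i, hi, rfl⟩ := List.mem_map.mp hB
      exact ⟨i, subset_rfl⟩
    have hd : bl.Pairwise Disjoint := by
      rw [hbl]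
      exact List.Pairwise.map L (fun i j hij => hLL i j hij)
        (Finset.sort_nodup (s := I) (r := (· ≤ ·)))
    obtain ⟨i, hiI, j, hjI, hij⟩ := Finset.one_lt_card.mp hI
    have hcross : ∃ i j B₁ B₂, i ≠ j ∧ B₁ ∈ bl ∧ B₂ ∈ bl ∧ B₁ ⊆ L i ∧ B₂ ⊆ L j :=
      ⟨i, j, L i, L j, hij,
        List.mem_map.mpr ⟨i, (Finset.mem_sort _).mpr hiI, rfl⟩,
        List.mem_map.mpr ⟨j, (Finset.mem_sort _).mpr hjI, rfl⟩,
        subset_rfl, subset_rfl⟩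
    have := ZZrec hidem hF h3 ((bl.map (fun B => B.card - 1)).sum) bl le_rfl
      hne hcl hd hcross
    rw [hfold, hmap] at this
    exact this

end Main


/-- Let `K = (J, L₁, …, L_q)` be a conditional partition of `[n]` with
`q ≥ 2` and `L = L₁ ∪ … ∪ L_q`. Then the following are equivalent:
(1) `K` induces an `F`-FCMI, i.e. `X_{L₁}, …, X_{L_q}` are mutually `F`-independent given
`X_J`; (2) `X_{J∪L∖L_I}.F(;_{i∈I} X_{Lᵢ}) = 0` for all `I ⊆ [q]` with `|I| ≥ 2`;
(3) `X_{J∪L∖W_I}.F(;_{w∈W_I} X_w) = 0` for all such `I` and all families of nonempty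
`Wᵢ ⊆ Lᵢ` (`i ∈ I`); (4) `X_{[n]∖W}.F(;_{w∈W} X_w) = 0` for every atom `p_W ∈ IM(K)`. -/
theorem FCMI_characterization
    {M G : Type*} [CommMonoid M] [AddCommGroup G]
    (hidem : ∀ x : M, x * x = x)
    (A : MAction M G) (F : M → G) (hF : ChainRule A F)
    (n q : ℕ) (hq : 2 ≤ q) (X : Fin n → M)
    (J : Finset (Fin n)) (L : Fin q → Finset (Fin n))
    (hLL : ∀ i j : Fin q, i ≠ j → Disjoint (L i) (L j))
    (hJL : ∀ i : Fin q, Disjoint J (L i))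
    (hcover : J ∪ Finset.univ.biUnion L = Finset.univ) :
    List.TFAE
      [ ∀ i : Fin q,
          Findep A F (∏ a ∈ L i, X a) (∏ j ∈ Finset.univ.erase i, ∏ a ∈ L j, X a)
            (∏ a ∈ J, X a),
        ∀ I : Finset (Fin q), 2 ≤ I.card →
          A.act (∏ a ∈ (J ∪ Finset.univ.biUnion L) \ I.biUnion L, X a)
            (Fint A F (fun i => ∏ a ∈ L i, X a) I) = 0,
        ∀ I : Finset (Fin q), 2 ≤ I.card → ∀ W : Fin q → Finset (Fin n),
          (∀ i ∈ I, W i ⊆ L i ∧ (W i).Nonempty) →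
          A.act (∏ a ∈ (J ∪ Finset.univ.biUnion L) \ I.biUnion W, X a)
            (Fint A F X (I.biUnion W)) = 0,
        ∀ Wset : Finset (Fin n),
          (∃ I : Finset (Fin q), 2 ≤ I.card ∧ ∃ W : Fin q → Finset (Fin n),
            (∀ i ∈ I, W i ⊆ L i ∧ (W i).Nonempty) ∧ Wset = I.biUnion W) →
          A.act (∏ a ∈ Finset.univ \ Wset, X a) (Fint A F X Wset) = 0 ] := by
  tfae_have 1 → 3 := fun h1 => h13 hidem hF hLL hJL hcover h1
  tfae_have 3 → 4 := fun h3 => h34 hcover h3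
  tfae_have 4 → 3 := fun h4 => h43 hcover h4
  tfae_have 3 → 2 := fun h3 => h32 hidem hF hLL h3
  tfae_have 2 → 1 := fun h2 => h21 hidem hF hLL h2
  tfae_finish

end AMRF
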